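/- Let q be an indeterminate over an integral domain T and ε ∈ T^× a primitive d-th root of unity. In the T[q^{±1}]-algebra generated by x, y with relation x y = q y x + 1 (a domain), one has x^d y^d - q^{d²} y^d x^d = ∑_{i=0}^{d-1} t_i y^i x^i for suitable t_i ∈ T[q^{±1}], where t_0 = ∏_{k=1}^{d} (1 + q + ⋯ + q^{k-1}) = ∏_{k=1}^d [k]_q. -/

import Mathlib

open FreeAlgebra LaurentPolynomial

/-- The defining relation of the quantized Weyl algebra over `T[q^{±1}]`:
`x y = q y x + 1`, with generators `x = 0`, `y = 1`. -/
inductive QWeylRel (T : Type*) [CommRing T] :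
    FreeAlgebra (LaurentPolynomial T) (Fin 2) → FreeAlgebra (LaurentPolynomial T) (Fin 2) → Prop
  | rel : QWeylRel T (ι (LaurentPolynomial T) 0 * ι (LaurentPolynomial T) 1)
      ((LaurentPolynomial.T 1 : LaurentPolynomial T) •
        (ι (LaurentPolynomial T) 1 * ι (LaurentPolynomial T) 0) + 1)

namespace QWeylAux
variable (T : Type*) [CommRing T]

noncomputable def Xg : RingQuot (QWeylRel T) :=
  RingQuot.mkAlgHom (LaurentPolynomial T) (QWeylRel T) (ι (LaurentPolynomial T) 0)

noncomputable def Yg : RingQuot (QWeylRel T) :=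
  RingQuot.mkAlgHom (LaurentPolynomial T) (QWeylRel T) (ι (LaurentPolynomial T) 1)

noncomputable def qn (n : ℕ) : LaurentPolynomial T :=
  ∑ j ∈ Finset.range n, (LaurentPolynomial.T 1 : LaurentPolynomial T) ^ j

lemma rel : Xg T * Yg T
    = (LaurentPolynomial.T 1 : LaurentPolynomial T) • (Yg T * Xg T) + 1 := by
  have h := RingQuot.mkAlgHom_rel (LaurentPolynomial T) (QWeylRel.rel (T := T))
  simpa [Xg, Yg, map_mul, map_add, map_smul, map_one] using h

lemma xyn (n : ℕ) : Xg T * (Yg T) ^ n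
    = ((LaurentPolynomial.T 1 : LaurentPolynomial T) ^ n) • ((Yg T) ^ n * Xg T)
      + qn T n • (Yg T) ^ (n - 1) := by
  induction n with
  | zero => simp [qn]
  | succ n ih =>
      have h1 : Xg T * Yg T ^ (n + 1) = (Xg T * Yg T ^ n) * Yg T := by
        rw [pow_succ, mul_assoc]
      have h2 : qn T n • (Yg T) ^ (n - 1) * Yg T = qn T n • (Yg T) ^ n := by
        cases n with
        | zero => simp [qn]
        | succ m => simp [smul_mul_assoc, ← pow_succ]
      rw [h1, ih, add_mul, h2, smul_mul_assoc, mul_assoc, rel, mul_add, mul_one, smul_add,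
        mul_smul_comm, smul_smul, ← pow_succ, ← mul_assoc, ← pow_succ]
      have h3 : qn T (n + 1) = (LaurentPolynomial.T 1 : LaurentPolynomial T) ^ n + qn T n := by
        rw [qn, Finset.sum_range_succ, add_comm]; rfl
      rw [h3, add_smul]
      simp [add_assoc]

noncomputable def c : ℕ → ℕ → ℕ → LaurentPolynomial T
  | 0, _, 0 => 1
  | 0, _, _+1 => 0
  | m+1, n, 0 => (LaurentPolynomial.T 1 : LaurentPolynomial T) ^ n * c m n 0
  | m+1, n, k+1 => (LaurentPolynomial.T 1 : LaurentPolynomial T) ^ (n - (k+1)) * c m n (k+1)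
      + qn T (n - k) * c m n k

lemma c_zero : ∀ m n k, m < k → c T m n k = 0 := by
  intro m
  induction m with
  | zero => intro n k h; cases k with
    | zero => omega
    | succ k => rfl
  | succ m ih =>
      intro n k h
      cases k with
      | zero => omega
      | succ k =>
          rw [c, ih n (k+1) (by omega), ih n k (by omega)]
          ring

lemma c_diag (n : ℕ) : ∀ m, c T m n m = ∏ j ∈ Finset.range m, qn T (n - j) := by
  intro m
  induction m with
  | zero => simp [c]
  | succ m ih =>
      rw [c, c_zero T m n (m+1) (by omega), ih, Finset.prod_range_succ]
      ring

lemma c_first (n : ℕ) : ∀ m, c T m n 0 = (LaurentPolynomial.T 1 : LaurentPolynomial T) ^ (n * m) := by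
  intro m
  induction m with
  | zero => simp [c]
  | succ m ih => rw [c, ih, ← pow_add, Nat.mul_succ, add_comm]

lemma normal (n : ℕ) : ∀ m, m ≤ n → Xg T ^ m * Yg T ^ n
    = ∑ k ∈ Finset.range (m+1), c T m n k • (Yg T ^ (n-k) * Xg T ^ (m-k)) := by
  intro m
  induction m with
  | zero => intro _; simp [c]
  | succ m ih =>
    intro hmn
    have hm : m ≤ n := by omega
    have key : ∀ k ∈ Finset.range (m+1),
        Xg T * (c T m n k • (Yg T ^ (n-k) * Xg T ^ (m-k)))
        = (c T m n k * (LaurentPolynomial.T 1 : LaurentPolynomial T) ^ (n-k)) •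
              (Yg T ^ (n-k) * Xg T ^ (m+1-k))
          + (c T m n k * qn T (n-k)) • (Yg T ^ (n-(k+1)) * Xg T ^ (m-k)) := by
      intro k hk
      simp only [Finset.mem_range] at hk
      rw [mul_smul_comm, ← mul_assoc, xyn, add_mul, smul_mul_assoc, smul_mul_assoc,
        mul_assoc, ← pow_succ', smul_add, smul_smul, smul_smul]
      have e1 : (m-k)+1 = m+1-k := by omega
      have e2 : n-k-1 = n-(k+1) := by omega
      rw [e1, e2]
    rw [pow_succ', mul_assoc, ih hm, Finset.mul_sum, Finset.sum_congr rfl key,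
      Finset.sum_add_distrib]
    -- massage the first sum on the LHS
    have hA : (∑ k ∈ Finset.range (m+1),
          (c T m n k * (LaurentPolynomial.T 1 : LaurentPolynomial T) ^ (n-k)) •
            (Yg T ^ (n-k) * Xg T ^ (m+1-k)))
        = (∑ k ∈ Finset.range (m+1),
          (c T m n (k+1) * (LaurentPolynomial.T 1 : LaurentPolynomial T) ^ (n-(k+1))) •
            (Yg T ^ (n-(k+1)) * Xg T ^ (m+1-(k+1))))
          + (c T m n 0 * (LaurentPolynomial.T 1 : LaurentPolynomial T) ^ (n-0)) •
            (Yg T ^ (n-0) * Xg T ^ (m+1-0)) := by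
      have h2 : (∑ k ∈ Finset.range (m+2),
          (c T m n k * (LaurentPolynomial.T 1 : LaurentPolynomial T) ^ (n-k)) •
            (Yg T ^ (n-k) * Xg T ^ (m+1-k)))
          = ∑ k ∈ Finset.range (m+1),
          (c T m n k * (LaurentPolynomial.T 1 : LaurentPolynomial T) ^ (n-k)) •
            (Yg T ^ (n-k) * Xg T ^ (m+1-k)) := by
        rw [Finset.sum_range_succ, c_zero T m n (m+1) (by omega)]
        simp
      rw [← h2, Finset.sum_range_succ']
    rw [hA]
    -- expand the RHS
    rw [Finset.sum_range_succ' (fun k => c T (m+1) n k • (Yg T ^ (n-k) * Xg T ^ (m+1-k))) (m+1)]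
    simp only [c, add_smul, Finset.sum_add_distrib]
    have eF : ∀ k ∈ Finset.range (m+1),
        (c T m n k * qn T (n-k)) • (Yg T ^ (n-(k+1)) * Xg T ^ (m-k))
        = (qn T (n-k) * c T m n k) • (Yg T ^ (n-(k+1)) * Xg T ^ (m+1-(k+1))) := by
      intro k hk
      have : m + 1 - (k+1) = m - k := by omega
      rw [this, mul_comm]
    have eA : ∀ k ∈ Finset.range (m+1),
        (c T m n (k+1) * (LaurentPolynomial.T 1 : LaurentPolynomial T) ^ (n-(k+1))) •
            (Yg T ^ (n-(k+1)) * Xg T ^ (m+1-(k+1)))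
        = ((LaurentPolynomial.T 1 : LaurentPolynomial T) ^ (n-(k+1)) * c T m n (k+1)) •
            (Yg T ^ (n-(k+1)) * Xg T ^ (m+1-(k+1))) := by
      intro k _; rw [mul_comm]
    rw [Finset.sum_congr rfl eF, Finset.sum_congr rfl eA]
    simp only [Nat.sub_zero]
    rw [mul_comm (c T m n 0)]
    abel

end QWeylAux

/-- In the `T[q^{±1}]`-algebra generated by `x, y` with `x y = q y x + 1`, one has
`x^d y^d - q^{d²} y^d x^d = ∑_{i=0}^{d-1} tᵢ yⁱ xⁱ` for suitable `tᵢ ∈ T[q^{±1}]`,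
with `t₀ = ∏_{k=1}^d [k]_q` where `[k]_q = 1 + q + ⋯ + q^{k-1}`. -/
theorem stmt_8 {T : Type*} [CommRing T] [IsDomain T] (d : ℕ) (hd : 0 < d)
    (ε : T) (hε : IsPrimitiveRoot ε d) (hεu : IsUnit ε) :
    ∃ t : ℕ → LaurentPolynomial T,
      (RingQuot.mkAlgHom (LaurentPolynomial T) (QWeylRel T) (ι (LaurentPolynomial T) 0)) ^ d *
        (RingQuot.mkAlgHom (LaurentPolynomial T) (QWeylRel T) (ι (LaurentPolynomial T) 1)) ^ d -
      ((LaurentPolynomial.T 1 : LaurentPolynomial T) ^ (d ^ 2)) •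
        ((RingQuot.mkAlgHom (LaurentPolynomial T) (QWeylRel T) (ι (LaurentPolynomial T) 1)) ^ d *
         (RingQuot.mkAlgHom (LaurentPolynomial T) (QWeylRel T) (ι (LaurentPolynomial T) 0)) ^ d)
      = ∑ i ∈ Finset.range d, t i •
          ((RingQuot.mkAlgHom (LaurentPolynomial T) (QWeylRel T) (ι (LaurentPolynomial T) 1)) ^ i *
           (RingQuot.mkAlgHom (LaurentPolynomial T) (QWeylRel T) (ι (LaurentPolynomial T) 0)) ^ i)
      ∧ t 0 = ∏ k ∈ Finset.range d,
          ∑ j ∈ Finset.range (k + 1), (LaurentPolynomial.T 1 : LaurentPolynomial T) ^ j := by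
  refine ⟨fun i => QWeylAux.c T d d (d - i), ?_, ?_⟩
  · show QWeylAux.Xg T ^ d * QWeylAux.Yg T ^ d
        - ((LaurentPolynomial.T 1 : LaurentPolynomial T) ^ (d ^ 2)) •
          (QWeylAux.Yg T ^ d * QWeylAux.Xg T ^ d)
      = ∑ i ∈ Finset.range d, QWeylAux.c T d d (d - i) •
          (QWeylAux.Yg T ^ i * QWeylAux.Xg T ^ i)
    rw [QWeylAux.normal T d d le_rfl,
      Finset.sum_range_succ' (fun k => QWeylAux.c T d d k •
        (QWeylAux.Yg T ^ (d - k) * QWeylAux.Xg T ^ (d - k))) d]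
    simp only [Nat.sub_zero, QWeylAux.c_first, ← pow_two]
    rw [add_sub_cancel_right (G := RingQuot (QWeylRel T))
      (∑ k ∈ Finset.range d, QWeylAux.c T d d (k + 1) •
        (QWeylAux.Yg T ^ (d - (k + 1)) * QWeylAux.Xg T ^ (d - (k + 1))))
      ((LaurentPolynomial.T 1 : LaurentPolynomial T) ^ (d ^ 2) •
        (QWeylAux.Yg T ^ d * QWeylAux.Xg T ^ d))]
    rw [← Finset.sum_range_reflect (fun i => QWeylAux.c T d d (d - i) •
      (QWeylAux.Yg T ^ i * QWeylAux.Xg T ^ i)) d]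
    apply Finset.sum_congr rfl
    intro j hj
    simp only [Finset.mem_range] at hj
    have e1 : d - (d - 1 - j) = j + 1 := by omega
    have e2 : d - 1 - j = d - (j + 1) := by omega
    rw [e1, e2]
  · show QWeylAux.c T d d (d - 0) = _
    have hr : (∏ k ∈ Finset.range d,
        ∑ j ∈ Finset.range (k + 1), (LaurentPolynomial.T 1 : LaurentPolynomial T) ^ j)
        = ∏ k ∈ Finset.range d, QWeylAux.qn T (k + 1) := rfl
    rw [Nat.sub_zero, QWeylAux.c_diag, hr,
      ← Finset.prod_range_reflect (fun k => QWeylAux.qn T (k + 1)) d]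
    apply Finset.prod_congr rfl
    intro j hj
    simp only [Finset.mem_range] at hj
    have e : d - 1 - j + 1 = d - j := by omega
    rw [e]
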